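/- Let f : {0,1}^n → {0,1} be boolean-valued, let 0 < δ < 1/2, and set k = ⌈log_{3/4} δ⌉ and ε = ln(1+δ)/k. If g is a conical d-junta with |g(x) - (1 + f(x))| ≤ ε for all x, then g' := ((g + ε)/2)^k is a conical (kd)-junta with |g'(x) - f(x)| ≤ δ for all x. Consequently deg⁺_ε(1+f) ≥ deg⁺_δ(f)/k. -/

import Mathlib

/-- A conjunction of literals over variables indexed by `ι`, given as a partial assignment. -/
def Conj (ι : Type*) : Type _ := ι → Option Bool

/-- The width of a conjunction: the number of literals it mentions. -/
def Conj.width {ι : Type*} [Fintype ι] (c : Conj ι) : ℕ :=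
  (Finset.univ.filter fun i => (c i).isSome).card

/-- The 0/1 indicator function of a conjunction. -/
def Conj.eval {ι : Type*} [Fintype ι] [DecidableEq ι] (c : Conj ι) (x : ι → Bool) : ℝ :=
  if ∀ i b, c i = some b → x i = b then 1 else 0

/-- `g` is a conical `d`-junta: a nonnegative linear combination of width-`≤ d` conjunctions. -/
def IsConicalJunta {ι : Type*} [Fintype ι] [DecidableEq ι] (d : ℕ)
    (g : (ι → Bool) → ℝ) : Prop :=
  ∃ (m : ℕ) (c : Fin m → Conj ι) (w : Fin m → ℝ),
    (∀ i, 0 ≤ w i) ∧ (∀ i, (c i).width ≤ d) ∧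
    ∀ x, g x = ∑ i, w i * (c i).eval x

/-- The `ε`-approximate nonnegative degree of `f`: the least `d` such that some conical
`d`-junta approximates `f` within `ε` pointwise. -/
noncomputable def nndeg {ι : Type*} [Fintype ι] [DecidableEq ι] (ε : ℝ)
    (f : (ι → Bool) → ℝ) : ℕ :=
  sInf {d | ∃ g, IsConicalJunta d g ∧ ∀ x, |f x - g x| ≤ ε}
section Aux
variable {ι : Type*} [Fintype ι] [DecidableEq ι]

lemma junta_of_fintype {κ : Type*} [Fintype κ] {d : ℕ} {g : (ι → Bool) → ℝ}
    (c : κ → Conj ι) (w : κ → ℝ) (hw : ∀ i, 0 ≤ w i) (hd : ∀ i, (c i).width ≤ d)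
    (hg : ∀ x, g x = ∑ i, w i * (c i).eval x) : IsConicalJunta d g := by
  classical
  let e := Fintype.equivFin κ
  refine ⟨Fintype.card κ, c ∘ e.symm, w ∘ e.symm, fun i => hw _, fun i => hd _, fun x => ?_⟩
  rw [hg x]
  exact (Fintype.sum_equiv e.symm _ _ fun i => rfl).symm

lemma junta_const {d : ℕ} {a : ℝ} (ha : 0 ≤ a) :
    IsConicalJunta d (fun _ : ι → Bool => a) := by
  refine ⟨1, fun _ => (fun _ => none), fun _ => a, fun _ => ha, fun i => ?_, fun x => ?_⟩
  · simp [Conj.width]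
  · simp [Conj.eval]

/-- merge of two conjunctions -/
def cmerge (c₁ c₂ : Conj ι) : Conj ι := fun i => (c₁ i).elim (c₂ i) some

def Compat (c₁ c₂ : Conj ι) : Prop :=
  ∀ i b₁ b₂, c₁ i = some b₁ → c₂ i = some b₂ → b₁ = b₂

lemma cmerge_apply_some {c₁ c₂ : Conj ι} {i : ι} {b : Bool} :
    cmerge c₁ c₂ i = some b ↔ c₁ i = some b ∨ (c₁ i = none ∧ c₂ i = some b) := by
  unfold cmerge
  cases h : c₁ i <;> simp [h]

lemma cmerge_width (c₁ c₂ : Conj ι) :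
    (cmerge c₁ c₂).width ≤ c₁.width + c₂.width := by
  classical
  unfold Conj.width
  refine le_trans (Finset.card_le_card ?_) (Finset.card_union_le _ _)
  intro i hi
  simp only [Finset.mem_filter, Finset.mem_univ, true_and, Finset.mem_union] at hi ⊢
  cases h : c₁ i with
  | some b => left; simp [h]
  | none => right; simp only [cmerge, h, Option.elim] at hi; exact hi

lemma cmerge_eval (c₁ c₂ : Conj ι) (x : ι → Bool) (h : Compat c₁ c₂) :
    (cmerge c₁ c₂).eval x = c₁.eval x * c₂.eval x := by
  classical
  have key : (∀ i b, cmerge c₁ c₂ i = some b → x i = b) ↔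
      ((∀ i b, c₁ i = some b → x i = b) ∧ (∀ i b, c₂ i = some b → x i = b)) := by
    constructor
    · intro hm
      constructor
      · intro i b hb; exact hm i b (cmerge_apply_some.mpr (Or.inl hb))
      · intro i b hb
        cases hc : c₁ i with
        | none => exact hm i b (cmerge_apply_some.mpr (Or.inr ⟨hc, hb⟩))
        | some b' =>
          have hbb := h i b' b hc hb
          exact hbb ▸ hm i b' (cmerge_apply_some.mpr (Or.inl hc))
    · rintro ⟨h₁, h₂⟩ i b hb
      rcases cmerge_apply_some.mp hb with hc | ⟨-, hc⟩
      · exact h₁ i b hc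
      · exact h₂ i b hc
  unfold Conj.eval
  rw [if_congr key rfl rfl]
  by_cases h₁ : (∀ i b, c₁ i = some b → x i = b)
  · by_cases h₂ : (∀ i b, c₂ i = some b → x i = b)
    · rw [if_pos h₁, if_pos h₂, if_pos ⟨h₁, h₂⟩]; norm_num
    · rw [if_pos h₁, if_neg h₂, if_neg (fun hc => h₂ hc.2)]; norm_num
  · rw [if_neg h₁, if_neg (fun hc => h₁ hc.1)]; norm_num

lemma eval_mul_of_not_compat (c₁ c₂ : Conj ι) (x : ι → Bool) (h : ¬ Compat c₁ c₂) :
    c₁.eval x * c₂.eval x = 0 := by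
  unfold Compat at h
  push_neg at h
  obtain ⟨i, b₁, b₂, hc₁, hc₂, hb⟩ := h
  unfold Conj.eval
  by_cases h₁ : ∀ i b, c₁ i = some b → x i = b
  · have h₂ : ¬ ∀ i b, c₂ i = some b → x i = b := by
      intro h₂; exact hb ((h₁ i b₁ hc₁).symm.trans (h₂ i b₂ hc₂))
    rw [if_pos h₁, if_neg h₂, mul_zero]
  · rw [if_neg h₁, zero_mul]

lemma junta_mul {d₁ d₂ : ℕ} {g₁ g₂ : (ι → Bool) → ℝ}
    (h₁ : IsConicalJunta d₁ g₁) (h₂ : IsConicalJunta d₂ g₂) :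
    IsConicalJunta (d₁ + d₂) (fun x => g₁ x * g₂ x) := by
  classical
  obtain ⟨m₁, c₁, w₁, hw₁, hd₁, hg₁⟩ := h₁
  obtain ⟨m₂, c₂, w₂, hw₂, hd₂, hg₂⟩ := h₂
  refine junta_of_fintype (κ := Fin m₁ × Fin m₂)
    (fun p => cmerge (c₁ p.1) (c₂ p.2))
    (fun p => if Compat (c₁ p.1) (c₂ p.2) then w₁ p.1 * w₂ p.2 else 0)
    (fun p => ?_) (fun p => ?_) (fun x => ?_)
  · split
    · exact mul_nonneg (hw₁ _) (hw₂ _)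
    · exact le_refl 0
  · exact le_trans (cmerge_width _ _) (add_le_add (hd₁ _) (hd₂ _))
  · rw [hg₁ x, hg₂ x, Finset.sum_mul_sum, Fintype.sum_prod_type]
    refine Finset.sum_congr rfl fun i _ => Finset.sum_congr rfl fun j _ => ?_
    dsimp only
    by_cases hc : Compat (c₁ i) (c₂ j)
    · rw [if_pos hc, cmerge_eval _ _ _ hc]; ring
    · rw [if_neg hc, zero_mul]
      have h0 := eval_mul_of_not_compat (c₁ i) (c₂ j) x hc
      have hr : w₁ i * (c₁ i).eval x * (w₂ j * (c₂ j).eval x)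
          = w₁ i * w₂ j * ((c₁ i).eval x * (c₂ j).eval x) := by ring
      rw [hr, h0, mul_zero]

lemma junta_pow {d : ℕ} {g : (ι → Bool) → ℝ} (h : IsConicalJunta d g) (k : ℕ) :
    IsConicalJunta (k * d) (fun x => g x ^ k) := by
  induction k with
  | zero => simpa using junta_const (d := 0) (zero_le_one (α := ℝ))
  | succ k ih =>
    have h2 := junta_mul ih h
    simp only [pow_succ, add_one_mul]
    exact h2

lemma junta_affine {d : ℕ} {g : (ι → Bool) → ℝ} (h : IsConicalJunta d g)
    {a : ℝ} (ha : 0 ≤ a) : IsConicalJunta d (fun x => (g x + a) / 2) := by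
  classical
  obtain ⟨m, c, w, hw, hd, hg⟩ := h
  refine junta_of_fintype (κ := Option (Fin m))
    (fun o => o.elim (fun _ => none) c)
    (fun o => o.elim (a / 2) (fun i => w i / 2))
    (fun o => ?_) (fun o => ?_) (fun x => ?_)
  · cases o with
    | none => simpa using div_nonneg ha (by norm_num)
    | some i => simpa using div_nonneg (hw i) (by norm_num)
  · cases o with
    | none => show (Conj.width (fun _ => none : Conj ι)) ≤ d; simp [Conj.width]
    | some i => exact hd i
  · rw [Fintype.sum_option]
    simp only [Option.elim]
    have he : Conj.eval (fun _ => none : Conj ι) x = 1 := by simp [Conj.eval]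
    rw [he, hg x]
    rw [Finset.sum_congr rfl
        (fun i _ => show w i / 2 * (c i).eval x = (w i * (c i).eval x) / 2 by ring),
      ← Finset.sum_div]
    ring

lemma junta_exact {g : (ι → Bool) → ℝ} (h : ∀ x, 0 ≤ g x) :
    IsConicalJunta (Fintype.card ι) g := by
  classical
  refine junta_of_fintype (κ := ι → Bool) (fun y => fun i => some (y i)) (fun y => g y)
    h (fun y => ?_) (fun x => ?_)
  · simp [Conj.width]
  · have he : ∀ y : ι → Bool, Conj.eval (fun i => some (y i)) x = if y = x then 1 else 0 := by
      intro y
      unfold Conj.eval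
      congr 1
      simp only [eq_iff_iff]
      constructor
      · intro h'
        funext i
        exact (h' i (y i) rfl).symm
      · intro h' i b hb
        subst h'
        exact Option.some.inj hb
    simp [he]
end Aux

/-- Let `f` be boolean-valued, `0 < δ < 1/2`, `k = ⌈log_{3/4} δ⌉` and
`ε = ln(1+δ)/k`. If `g` is a conical `d`-junta with `|g(x) - (1 + f(x))| ≤ ε` for all `x`,
then `g' := ((g + ε)/2)^k` is a conical `(k·d)`-junta with `|g'(x) - f(x)| ≤ δ` for all `x`.
Consequently `deg⁺_ε(1 + f) ≥ deg⁺_δ(f)/k`. -/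
theorem ufa_stmt5 (n : ℕ) (δ : ℝ) (hδ0 : 0 < δ) (hδ1 : δ < 1 / 2)
    (k : ℕ) (hk : k = ⌈Real.log δ / Real.log (3 / 4)⌉₊)
    (ε : ℝ) (hε : ε = Real.log (1 + δ) / k)
    (f : (Fin n → Bool) → ℝ) (hf : ∀ x, f x = 0 ∨ f x = 1) :
    (∀ (d : ℕ) (g : (Fin n → Bool) → ℝ), IsConicalJunta d g →
      (∀ x, |g x - (1 + f x)| ≤ ε) →
      IsConicalJunta (k * d) (fun x => ((g x + ε) / 2) ^ k) ∧
      ∀ x, |((g x + ε) / 2) ^ k - f x| ≤ δ) ∧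
    nndeg δ f ≤ k * nndeg ε (fun x => 1 + f x) := by
  classical
  have hδ1' : δ < 1 := by linarith
  have hL : Real.log (3 / 4 : ℝ) < 0 := Real.log_neg (by norm_num) (by norm_num)
  have hlog : Real.log δ < Real.log (3 / 4 : ℝ) := Real.log_lt_log hδ0 (by linarith)
  have hr1 : (1 : ℝ) < Real.log δ / Real.log (3 / 4) := by
    rw [lt_div_iff_of_neg hL]; linarith
  have hk1 : 1 < k := by
    rw [hk]; exact Nat.lt_ceil.mpr (by push_cast; exact hr1)
  have hk0 : 0 < k := by omega
  have hkR : (0 : ℝ) < k := by exact_mod_cast hk0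
  have hkr : Real.log δ / Real.log (3 / 4) ≤ k := by rw [hk]; exact Nat.le_ceil _
  have hpow : (3 / 4 : ℝ) ^ k ≤ δ := by
    have h1 : (k : ℝ) * Real.log (3 / 4) ≤ Real.log δ := by
      have h2 := mul_le_mul_of_nonpos_right hkr (le_of_lt hL)
      rw [div_mul_cancel₀ _ (ne_of_lt hL)] at h2
      linarith
    calc (3 / 4 : ℝ) ^ k = Real.exp ((k : ℝ) * Real.log (3 / 4)) := by
          rw [Real.exp_nat_mul, Real.exp_log (by norm_num)]
      _ ≤ Real.exp (Real.log δ) := Real.exp_le_exp.mpr h1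
      _ = δ := Real.exp_log hδ0
  have hlog1δ : 0 ≤ Real.log (1 + δ) := Real.log_nonneg (by linarith)
  have hε0 : 0 ≤ ε := by rw [hε]; positivity
  have hεk : ε * k = Real.log (1 + δ) := by rw [hε]; field_simp
  have hlog32 : Real.log (1 + δ) < 1 / 2 := by
    have h1 : Real.log (1 + δ) < Real.log (3 / 2) := Real.log_lt_log (by linarith) (by linarith)
    have h2 : Real.log (3 / 2 : ℝ) < 3 / 2 - 1 := Real.log_lt_sub_one_of_pos (by norm_num) (by norm_num)
    linarith
  have hε14 : ε ≤ 1 / 4 := by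
    rw [hε]
    have hk2 : (2 : ℝ) ≤ k := by exact_mod_cast hk1
    rw [div_le_iff₀ hkR]
    nlinarith
  have h1ε : (1 + ε) ^ k ≤ 1 + δ := by
    have h1 : (1 + ε) ≤ Real.exp ε := by linarith [Real.add_one_le_exp ε]
    calc (1 + ε) ^ k ≤ (Real.exp ε) ^ k := pow_le_pow_left₀ (by linarith) h1 k
      _ = Real.exp (ε * k) := by rw [← Real.exp_nat_mul, mul_comm]
      _ = 1 + δ := by rw [hεk, Real.exp_log (by linarith)]
  have main : ∀ (d : ℕ) (g : (Fin n → Bool) → ℝ), IsConicalJunta d g →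
      (∀ x, |g x - (1 + f x)| ≤ ε) →
      IsConicalJunta (k * d) (fun x => ((g x + ε) / 2) ^ k) ∧
      ∀ x, |((g x + ε) / 2) ^ k - f x| ≤ δ := by
    intro d g hg happ
    constructor
    · exact junta_pow (junta_affine hg hε0) k
    · intro x
      have hx := happ x
      rw [abs_le] at hx ⊢
      rcases hf x with h0 | h1
      · rw [h0] at hx ⊢
        have ht0 : 0 ≤ (g x + ε) / 2 := by linarith [hx.1]
        have ht1 : (g x + ε) / 2 ≤ 3 / 4 := by linarith [hx.2]
        have hp0 : 0 ≤ ((g x + ε) / 2) ^ k := pow_nonneg ht0 k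
        have hp1 : ((g x + ε) / 2) ^ k ≤ (3 / 4 : ℝ) ^ k := pow_le_pow_left₀ ht0 ht1 k
        constructor <;> [linarith; linarith [hpow]]
      · rw [h1] at hx ⊢
        have ht0 : 1 ≤ (g x + ε) / 2 := by linarith [hx.1]
        have ht1 : (g x + ε) / 2 ≤ 1 + ε := by linarith [hx.2]
        have hp0 : 1 ≤ ((g x + ε) / 2) ^ k := by
          have h1k := pow_le_pow_left₀ (zero_le_one (α := ℝ)) ht0 k
          simpa using h1k
        have hp1 : ((g x + ε) / 2) ^ k ≤ (1 + ε) ^ k := pow_le_pow_left₀ (by linarith) ht1 k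
        constructor <;> [linarith; linarith [h1ε]]
  refine ⟨main, ?_⟩
  simp only [nndeg]
  have hne : {d | ∃ g, IsConicalJunta d g ∧ ∀ x, |(1 + f x) - g x| ≤ ε}.Nonempty := by
    refine ⟨n, (fun x => 1 + f x), ?_, ?_⟩
    · have h := junta_exact (ι := Fin n) (g := fun x => 1 + f x)
        (fun x => by rcases hf x with h | h <;> rw [h] <;> norm_num)
      simpa using h
    · intro x; simpa using hε0
  have hmem := Nat.sInf_mem hne
  obtain ⟨g, hg, happ⟩ := hmem
  have happ' : ∀ x, |g x - (1 + f x)| ≤ ε := fun x => by rw [abs_sub_comm]; exact happ x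
  obtain ⟨hj, hd⟩ := main _ g hg happ'
  exact Nat.sInf_le ⟨_, hj, fun x => by rw [abs_sub_comm]; exact hd x⟩
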